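/- With corrected squared leg-lengths L̃²_pr = L̄²_pr + (1/12)(⟨n(p)−n(r), p−r⟩)² and L̃²_pq = L̄²_pq + (1/12)(⟨n(p)−n(q), p−q⟩)², define the corrected triangle area by Ã²_pqr = (1/16)·L̃²_pr·(4L̃²_pq − L̃²_pr) and total corrected lantern area S̃ = 4NM·Ã_pqr. Then S² − S̃² satisfies 32π⁶/(45N⁴) − (8π⁸/(189N⁶))·(6 + 63M²) < S² − S̃² < 32π⁶/(45N⁴), where S = 2π. -/

import Mathlib

open Real Filter Asymptotics

set_option maxHeartbeats 1000000

/-- Squared Euclidean distance between two points of `ℝ³`. -/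
noncomputable def distSq (a b : Fin 3 → ℝ) : ℝ :=
  (a 0 - b 0) ^ 2 + (a 1 - b 1) ^ 2 + (a 2 - b 2) ^ 2

/-- Euclidean inner product on `ℝ³`. -/
noncomputable def inner3 (a b : Fin 3 → ℝ) : ℝ :=
  a 0 * b 0 + a 1 * b 1 + a 2 * b 2

/-- Euclidean area of the triangle with vertices `a b c` in `ℝ³`
(half the norm of the cross product of two edge vectors). -/
noncomputable def triArea (a b c : Fin 3 → ℝ) : ℝ :=
  (1 / 2) * Real.sqrt
    (((b 1 - a 1) * (c 2 - a 2) - (b 2 - a 2) * (c 1 - a 1)) ^ 2 +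
     ((b 2 - a 2) * (c 0 - a 0) - (b 0 - a 0) * (c 2 - a 2)) ^ 2 +
     ((b 0 - a 0) * (c 1 - a 1) - (b 1 - a 1) * (c 0 - a 0)) ^ 2)

/-- Vertex `p = (1,0,0)` of a typical Schwarz-lantern triangle. -/
noncomputable def vecP : Fin 3 → ℝ := ![1, 0, 0]

/-- Vertex `q = (cos(π/N), sin(π/N), 1/(2M))` of a typical Schwarz-lantern triangle. -/
noncomputable def vecQ (N M : ℝ) : Fin 3 → ℝ := ![Real.cos (π / N), Real.sin (π / N), 1 / (2 * M)]

/-- Vertex `r = (cos(2π/N), sin(2π/N), 0)` of a typical Schwarz-lantern triangle. -/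
noncomputable def vecR (N : ℝ) : Fin 3 → ℝ := ![Real.cos (2 * π / N), Real.sin (2 * π / N), 0]

/-- Outward unit normal of the unit cylinder `x² + y² = 1` at a point `(x,y,z)`. -/
noncomputable def cylNormal (v : Fin 3 → ℝ) : Fin 3 → ℝ := ![v 0, v 1, 0]

private lemma cos_taylor_bound (x : ℝ) (hx : |x| ≤ 1) :
    |Real.cos x - (1 - x^2/2 + x^4/24 - x^6/720 + x^8/40320 - x^10/3628800)| ≤
      |x|^12 * (13 / 5748019200) := by
  have key := Complex.exp_bound (x := x * Complex.I) (by simpa using hx) (n := 12) (by norm_num)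
  have hre : (Complex.exp (x * Complex.I)).re = Real.cos x := by
    simpa using Complex.exp_ofReal_mul_I_re x
  have hsum : (∑ m ∈ Finset.range 12, (x * Complex.I) ^ m / m.factorial).re
      = 1 - x^2/2 + x^4/24 - x^6/720 + x^8/40320 - x^10/3628800 := by
    simp [Finset.sum_range_succ, Nat.factorial]
    norm_num [pow_succ, Complex.div_re, Complex.normSq]
    ring
  calc |Real.cos x - _| = |(Complex.exp (x * Complex.I) - ∑ m ∈ Finset.range 12, (x * Complex.I) ^ m / m.factorial).re| := by
        rw [Complex.sub_re, hre, hsum]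
    _ ≤ ‖(Complex.exp (x * Complex.I) - ∑ m ∈ Finset.range 12, (x * Complex.I) ^ m / m.factorial)‖ :=
        Complex.abs_re_le_norm _
    _ ≤ ‖(x * Complex.I)‖ ^ 12 * (Nat.succ 12 * ((Nat.factorial 12) * (12:ℕ) : ℝ)⁻¹) := key
    _ ≤ |x|^12 * (13 / 5748019200) := by
        rw [norm_mul, Complex.norm_I, Complex.norm_real, Real.norm_eq_abs, mul_one]
        norm_num [Nat.factorial]

private lemma mono_w {a b : ℝ} (h : a ≤ b) (ha : 0 ≤ a) (hb : b ≤ 1) :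
    2*a - a^2 ≤ 2*b - b^2 := by nlinarith

private lemma mono_quad {a b : ℝ} (h : a ≤ b) (ha : 0 ≤ a) (hb : 0 ≤ b) :
    4*a + (4/3)*a^2 ≤ 4*b + (4/3)*b^2 := by nlinarith

private lemma polyfacts (x : ℝ) (hx0 : 0 < x) (hx1 : x ≤ 1/100) :
    (0 < x/2 - x^2/24 + x^3/720 - x^4/40000) ∧
    (x/2 - x^2/24 + x^3/720 - x^4/40320 + x^5/3000000 ≤ x/2) ∧
    (0 ≤ x^4*(1/40000 - 1/40320) - x^5/3628800 - x^6*(13/5748019200)) ∧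
    (0 ≤ x^5*(1/3000000 - 1/3628800) - x^6*(13/5748019200)) ∧
    (4*x - (32/45)*x^3 ≤ 4*(2*(x/2 - x^2/24 + x^3/720 - x^4/40000) - (x/2 - x^2/24 + x^3/720 - x^4/40000)^2)
      + (4/3)*(2*(x/2 - x^2/24 + x^3/720 - x^4/40000) - (x/2 - x^2/24 + x^3/720 - x^4/40000)^2)^2) ∧
    (4*(2*(x/2 - x^2/24 + x^3/720 - x^4/40320 + x^5/3000000) - (x/2 - x^2/24 + x^3/720 - x^4/40320 + x^5/3000000)^2)
      + (4/3)*(2*(x/2 - x^2/24 + x^3/720 - x^4/40320 + x^5/3000000) - (x/2 - x^2/24 + x^3/720 - x^4/40320 + x^5/3000000)^2)^2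
      < 4*x - (32/45)*x^3 + (16/63)*x^4) ∧
    (0 ≤ 2*(x/2 - x^2/24 + x^3/720 - x^4/40000) - (x/2 - x^2/24 + x^3/720 - x^4/40000)^2) ∧
    (0 ≤ 2*(x/2 - x^2/24 + x^3/720 - x^4/40320 + x^5/3000000) - (x/2 - x^2/24 + x^3/720 - x^4/40320 + x^5/3000000)^2) := by
  have hp : ∀ i : ℕ, x^(i+1) ≤ x^i * (1/100) := fun i => by
    calc x^(i+1) = x^i * x := by ring
      _ ≤ x^i * (1/100) := mul_le_mul_of_nonneg_left hx1 (by positivity)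
  have hq : ∀ i : ℕ, 0 < x^i := fun i => pow_pos hx0 i
  have hp1 := hp 1; have hp2 := hp 2; have hp3 := hp 3; have hp4 := hp 4
  have hp5 := hp 5; have hp6 := hp 6; have hp7 := hp 7; have hp8 := hp 8
  have hp9 := hp 9; have hp10 := hp 10; have hp11 := hp 11; have hp12 := hp 12
  have hp13 := hp 13; have hp14 := hp 14; have hp15 := hp 15; have hp16 := hp 16
  have hp17 := hp 17; have hp18 := hp 18; have hp19 := hp 19
  have hq1 := hq 1; have hq2 := hq 2; have hq3 := hq 3; have hq4 := hq 4
  have hq5 := hq 5; have hq6 := hq 6; have hq7 := hq 7; have hq8 := hq 8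
  have hq9 := hq 9; have hq10 := hq 10; have hq11 := hq 11; have hq12 := hq 12
  have hq13 := hq 13; have hq14 := hq 14; have hq15 := hq 15; have hq16 := hq 16
  have hq17 := hq 17; have hq18 := hq 18; have hq19 := hq 19; have hq20 := hq 20
  exact ⟨by linarith, by linarith, by linarith, by linarith, by linarith, by linarith,
    by linarith, by linarith⟩

private lemma key_estimates (θ C : ℝ) (hθ0 : 0 < θ) (hθ1 : θ ≤ 1/10)
    (hC : |C - (1 - θ^2/2 + θ^4/24 - θ^6/720 + θ^8/40320 - θ^10/3628800)| ≤
      |θ|^12 * (13/5748019200)) :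
    (4*θ^2 - (32/45)*θ^6 ≤ (4/3)*(1-C^2)*(4-C^2)) ∧
    ((4/3)*(1-C^2)*(4-C^2) < 4*θ^2 - (32/45)*θ^6 + (16/63)*θ^8) ∧
    (0 < ((4/3)*(1-C^2)*(4-C^2)) * ((4/3)*(1-C)^3*(3+C))) ∧
    (((4/3)*(1-C^2)*(4-C^2)) * ((4/3)*(1-C)^3*(3+C)) ≤ (8/3)*θ^8) := by
  rw [abs_of_pos hθ0] at hC
  obtain ⟨hC1, hC2⟩ := abs_le.1 hC
  have hx0 : 0 < θ^2 := by positivity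
  have hx1 : θ^2 ≤ 1/100 := by
    linarith [mul_le_mul_of_nonneg_left hθ1 hθ0.le, hθ0, hθ1]
  obtain ⟨F1, F2, F3, F4, F5, F6, F7, F8⟩ := polyfacts (θ^2) hx0 hx1
  have hq5 : (0:ℝ) < (θ^2)^5 := pow_pos hx0 5
  have hq6 : (0:ℝ) < (θ^2)^6 := pow_pos hx0 6
  obtain ⟨w, hwdef⟩ : ∃ w : ℝ, w = 1 - C := ⟨_, rfl⟩
  have hw1 : θ^2/2 - (θ^2)^2/24 + (θ^2)^3/720 - (θ^2)^4/40000 ≤ w := by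
    rw [hwdef]; linarith [hC2, F3, hq5.le, hq6.le]
  have hw2 : w ≤ θ^2/2 - (θ^2)^2/24 + (θ^2)^3/720 - (θ^2)^4/40320 + (θ^2)^5/3000000 := by
    rw [hwdef]; linarith [hC1, F4]
  have hw0 : 0 < w := lt_of_lt_of_le F1 hw1
  have hwx : w ≤ θ^2/2 := le_trans hw2 F2
  have hwhalf : w ≤ 1/200 := by linarith
  have hw1' : w ≤ 1 := by linarith
  have hwhi1 : θ^2/2 - (θ^2)^2/24 + (θ^2)^3/720 - (θ^2)^4/40320 + (θ^2)^5/3000000 ≤ 1 := by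
    linarith [F2]
  have hD1 := mono_w hw1 F1.le hw1'
  have hD2 := mono_w hw2 hw0.le hwhi1
  have hDw0 : 0 ≤ 2*w - w^2 := by
    linarith [mul_nonneg hw0.le (show (0:ℝ) ≤ 2 - w by linarith)]
  have hM1 := mono_quad hD1 F7 hDw0
  have hM2 := mono_quad hD2 hDw0 F8
  have hA : (4/3)*(1-C^2)*(4-C^2) = 4*(2*w - w^2) + (4/3)*(2*w - w^2)^2 := by
    rw [hwdef]; ring
  refine ⟨?_, ?_, ?_, ?_⟩
  · rw [hA]
    calc 4*θ^2 - (32/45)*θ^6 = 4*(θ^2) - (32/45)*(θ^2)^3 := by ring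
      _ ≤ _ := F5
      _ ≤ _ := hM1
  · rw [hA]
    calc 4*(2*w - w^2) + (4/3)*(2*w - w^2)^2 ≤ _ := hM2
      _ < 4*(θ^2) - (32/45)*(θ^2)^3 + (16/63)*(θ^2)^4 := F6
      _ = 4*θ^2 - (32/45)*θ^6 + (16/63)*θ^8 := by ring
  · have hK : ((4/3)*(1-C^2)*(4-C^2)) * ((4/3)*(1-C)^3*(3+C))
        = (16/9)*w^4*((2-w)*(4-w)*(3+2*w-w^2)) := by rw [hwdef]; ring
    rw [hK]
    have c3 : (0:ℝ) < 3+2*w-w^2 := by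
      linarith [mul_le_mul_of_nonneg_left hwhalf hw0.le]
    have hGpos : 0 < (2-w)*(4-w)*(3+2*w-w^2) :=
      mul_pos (mul_pos (by linarith) (by linarith)) c3
    exact mul_pos (by positivity) hGpos
  · have hK : ((4/3)*(1-C^2)*(4-C^2)) * ((4/3)*(1-C)^3*(3+C))
        = (16/9)*w^4*((2-w)*(4-w)*(3+2*w-w^2)) := by rw [hwdef]; ring
    rw [hK]
    have c3 : (0:ℝ) < 3+2*w-w^2 := by
      linarith [mul_le_mul_of_nonneg_left hwhalf hw0.le]
    have hGpos : 0 ≤ (2-w)*(4-w)*(3+2*w-w^2) :=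
      le_of_lt (mul_pos (mul_pos (by linarith) (by linarith)) c3)
    have hG24 : (2-w)*(4-w)*(3+2*w-w^2) ≤ 24 := by
      linarith [mul_le_mul_of_nonneg_left hwhalf (sq_nonneg w), sq_nonneg w,
        pow_nonneg hw0.le 4, hw0.le]
    have hw4 : w^4 ≤ (θ^2/2)^4 := pow_le_pow_left₀ hw0.le hwx 4
    calc (16/9)*w^4*((2-w)*(4-w)*(3+2*w-w^2))
        ≤ (16/9)*(θ^2/2)^4*24 := by
          linarith [mul_le_mul_of_nonneg_right hw4 hGpos,
            mul_le_mul_of_nonneg_left hG24 (show (0:ℝ) ≤ (16/9)*(θ^2/2)^4 by positivity)]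
      _ ≤ (8/3)*θ^8 := le_of_eq (by ring)

/-- with corrected squared leg lengths
`L̃²_ij = L̄²_ij + (1/12)⟨n(i)−n(j), xᵢ−xⱼ⟩²`, corrected triangle area
`Ã²_pqr = (1/16)L̃²_pr(4L̃²_pq − L̃²_pr)` and total corrected lantern area
`S̃ = 4NM·Ã_pqr`, one has
`32π⁶/(45N⁴) − (8π⁸/(189N⁶))(6 + 63M²) < S² − S̃² < 32π⁶/(45N⁴)` with `S = 2π`,
for all `M ≥ 1` and all sufficiently large `N`. -/
theorem schwarz_corrected_area_error_bounds :
    ∃ N₀ : ℕ, ∀ N M : ℕ, N₀ ≤ N → 1 ≤ M →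
      let p := vecP
      let q := vecQ N M
      let r := vecR N
      let Lpr2 : ℝ := distSq p r +
        (1 / 12) * (inner3 (fun i => cylNormal p i - cylNormal r i) (fun i => p i - r i)) ^ 2
      let Lpq2 : ℝ := distSq p q +
        (1 / 12) * (inner3 (fun i => cylNormal p i - cylNormal q i) (fun i => p i - q i)) ^ 2
      let Atil2 : ℝ := (1 / 16) * Lpr2 * (4 * Lpq2 - Lpr2)
      let Stil : ℝ := 4 * N * M * Real.sqrt Atil2
      32 * π ^ 6 / (45 * N ^ 4) - (8 * π ^ 8 / (189 * N ^ 6)) * (6 + 63 * M ^ 2)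
          < (2 * π) ^ 2 - Stil ^ 2 ∧
      (2 * π) ^ 2 - Stil ^ 2 < 32 * π ^ 6 / (45 * N ^ 4) := by
  refine ⟨32, ?_⟩
  intro N M hN hM
  intro p q r Lpr2 Lpq2 Atil2 Stil
  have hNR : (32:ℝ) ≤ (N:ℝ) := by exact_mod_cast hN
  have hN0 : (0:ℝ) < N := by linarith
  have hNne : (N:ℝ) ≠ 0 := ne_of_gt hN0
  have hMR : (1:ℝ) ≤ (M:ℝ) := by exact_mod_cast hM
  have hM0 : (0:ℝ) < M := by linarith
  have hMne : (M:ℝ) ≠ 0 := ne_of_gt hM0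
  have hθ0 : 0 < π / N := div_pos pi_pos hN0
  have hθ1 : π / N ≤ 1/10 := by
    rw [div_le_iff₀ hN0]
    nlinarith [pi_lt_d2]
  have habs : |π / (N:ℝ)| ≤ 1 := by rw [abs_of_pos hθ0]; linarith
  have htay := cos_taylor_bound (π/N) habs
  obtain ⟨K1, K2, K3, K4⟩ := key_estimates (π/N) (Real.cos (π/N)) hθ0 hθ1 htay
  have hS2 : Real.sin (π/N) ^ 2 = 1 - Real.cos (π/N)^2 := by
    have := Real.sin_sq_add_cos_sq (π/N); linarith
  have h2θ : 2 * π / (N:ℝ) = 2 * (π/N) := by ring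
  have hcos2 : Real.cos (2*π/N) = 2*Real.cos (π/N)^2 - 1 := by
    rw [h2θ, Real.cos_two_mul]
  have hsin2 : Real.sin (2*π/N) = 2*Real.sin (π/N)*Real.cos (π/N) := by
    rw [h2θ, Real.sin_two_mul]
  have eLpr : Lpr2 = 4*(1-Real.cos (π/N)^2) + (4/3)*(1-Real.cos (π/N)^2)^2 := by
    show distSq vecP (vecR N) +
        (1 / 12) * (inner3 (fun i => cylNormal vecP i - cylNormal (vecR N) i)
          (fun i => vecP i - vecR N i)) ^ 2 = _
    simp only [distSq, inner3, vecP, vecR, cylNormal, Matrix.cons_val_zero, Matrix.cons_val_one,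
      Matrix.head_cons, Matrix.cons_val_two, Matrix.tail_cons]
    rw [hcos2, hsin2]
    linear_combination ((20/3)*Real.cos (π/N)^2 - 4*Real.cos (π/N)^4 + (4/3)*Real.cos (π/N)^6
      + (4/3)*Real.sin (π/N)^2*Real.cos (π/N)^4) * hS2
  have eLpq : Lpq2 = 2 - 2*Real.cos (π/N) + (1/(2*(M:ℝ)))^2
      + (1/12)*(2-2*Real.cos (π/N))^2 := by
    show distSq vecP (vecQ N M) +
        (1 / 12) * (inner3 (fun i => cylNormal vecP i - cylNormal (vecQ N M) i)
          (fun i => vecP i - vecQ N M i)) ^ 2 = _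
    simp only [distSq, inner3, vecP, vecQ, cylNormal, Matrix.cons_val_zero, Matrix.cons_val_one,
      Matrix.head_cons, Matrix.cons_val_two, Matrix.tail_cons]
    linear_combination (5/4 - Real.cos (π/N)/3 + Real.cos (π/N)^2/12 + Real.sin (π/N)^2/12) * hS2
  have hAtil : Atil2 = (1/16) * ((4/3)*(1-Real.cos (π/N)^2)*(4-Real.cos (π/N)^2))
      * (1/(M:ℝ)^2 + (4/3)*(1-Real.cos (π/N))^3*(3+Real.cos (π/N))) := by
    show (1 / 16) * Lpr2 * (4 * Lpq2 - Lpr2) = _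
    rw [eLpr, eLpq]
    field_simp
    ring
  have hA0 : 0 < (4/3)*(1-Real.cos (π/N)^2)*(4-Real.cos (π/N)^2) := by
    have h6 : (π/N)^6 ≤ (π/N)^2 * (1/10)^4 := by
      calc (π/N)^6 = (π/N)^2 * (π/N)^4 := by ring
        _ ≤ (π/N)^2 * (1/10)^4 := by
          apply mul_le_mul_of_nonneg_left _ (by positivity)
          apply pow_le_pow_left₀ hθ0.le hθ1
    nlinarith [pow_pos hθ0 2, K1]
  have hK0 : 0 < (4/3)*(1-Real.cos (π/N))^3*(3+Real.cos (π/N)) := by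
    rcases mul_pos_iff.mp K3 with ⟨_, h⟩ | ⟨h, _⟩
    · exact h
    · linarith
  have hAt0 : 0 ≤ Atil2 := by
    rw [hAtil]
    have : 0 < 1/(M:ℝ)^2 + (4/3)*(1-Real.cos (π/N))^3*(3+Real.cos (π/N)) := by positivity
    positivity
  have hStil2 : Stil^2 = (N:ℝ)^2 * ((4/3)*(1-Real.cos (π/N)^2)*(4-Real.cos (π/N)^2))
      + (N:ℝ)^2*(M:ℝ)^2*(((4/3)*(1-Real.cos (π/N)^2)*(4-Real.cos (π/N)^2))
        * ((4/3)*(1-Real.cos (π/N))^3*(3+Real.cos (π/N)))) := by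
    show (4 * (N:ℝ) * (M:ℝ) * Real.sqrt Atil2)^2 = _
    rw [mul_pow, Real.sq_sqrt hAt0, hAtil]
    field_simp
    ring
  have e1 : 32 * π ^ 6 / (45 * (N:ℝ) ^ 4) = (N:ℝ)^2 * ((32/45)*(π/N)^6) := by
    field_simp
  have e2 : (2 * π)^2 = (N:ℝ)^2 * (4*(π/N)^2) := by field_simp; ring
  have e3 : 8 * π ^ 8 / (189 * (N:ℝ) ^ 6) * (6 + 63 * (M:ℝ) ^ 2)
      = (N:ℝ)^2 * ((8/189)*(π/N)^8*(6 + 63*(M:ℝ)^2)) := by field_simp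
  have hN2 : (0:ℝ) < (N:ℝ)^2 := by positivity
  have hM2 : (0:ℝ) ≤ (M:ℝ)^2 := by positivity
  have hMK : (M:ℝ)^2 * (((4/3)*(1-Real.cos (π/N)^2)*(4-Real.cos (π/N)^2))
        * ((4/3)*(1-Real.cos (π/N))^3*(3+Real.cos (π/N)))) ≤ (M:ℝ)^2 * ((8/3)*(π/N)^8) :=
    mul_le_mul_of_nonneg_left K4 hM2
  have hMKpos : 0 < (M:ℝ)^2 * (((4/3)*(1-Real.cos (π/N)^2)*(4-Real.cos (π/N)^2))
        * ((4/3)*(1-Real.cos (π/N))^3*(3+Real.cos (π/N)))) :=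
    mul_pos (by positivity) K3
  constructor
  · -- lower bound
    have low : (32/45)*(π/N)^6 - (8/189)*(π/N)^8*(6 + 63*(M:ℝ)^2)
        < 4*(π/N)^2 - ((4/3)*(1-Real.cos (π/N)^2)*(4-Real.cos (π/N)^2))
          - (M:ℝ)^2 * (((4/3)*(1-Real.cos (π/N)^2)*(4-Real.cos (π/N)^2))
            * ((4/3)*(1-Real.cos (π/N))^3*(3+Real.cos (π/N)))) := by
      linarith [K2, hMK]
    have := mul_lt_mul_of_pos_left low hN2
    rw [e1, e2, e3, hStil2]
    linarith [this]
  · -- upper bound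
    have up : 4*(π/N)^2 - ((4/3)*(1-Real.cos (π/N)^2)*(4-Real.cos (π/N)^2))
          - (M:ℝ)^2 * (((4/3)*(1-Real.cos (π/N)^2)*(4-Real.cos (π/N)^2))
            * ((4/3)*(1-Real.cos (π/N))^3*(3+Real.cos (π/N))))
        < (32/45)*(π/N)^6 := by
      linarith [K1, hMKpos]
    have := mul_lt_mul_of_pos_left up hN2
    rw [e1, e2, hStil2]
    linarith [this]
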